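/- Let G be a finite abelian group and g ∈ G with ord(g) ≥ 3. Then ord(g) − 2 ∈ Δ*(G). In particular, if exp(G) ≥ 3 then exp(G) − 2 ∈ Δ*(G). -/

import Mathlib

/- Common definitions for zero-sum theory over a finite abelian group. -/

variable {G : Type*} [AddCommGroup G]

/-- `S` is a zero-sum sequence over the subset `G₀`:
a finite multiset of elements of `G₀` whose sum is `0`. -/
def IsZeroSumSeq (G₀ : Set G) (S : Multiset G) : Prop :=
  (∀ g ∈ S, g ∈ G₀) ∧ S.sum = 0

/-- `A` is an atom (minimal zero-sum sequence) over `G₀`: a nonempty zero-sum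
sequence over `G₀` that cannot be written as the union of two nonempty
zero-sum sequences, i.e. has no proper nonempty zero-sum subsequence. -/
def IsAtomOver (G₀ : Set G) (A : Multiset G) : Prop :=
  IsZeroSumSeq G₀ A ∧ A ≠ 0 ∧
    ∀ B : Multiset G, B ≤ A → B ≠ 0 → B ≠ A → B.sum ≠ 0

/-- The set of lengths `L(B)` of a zero-sum sequence `B` over `G₀`: all `k`
such that `B` is a union of `k` atoms over `G₀`. -/
def lengthSet (G₀ : Set G) (B : Multiset G) : Set ℕ :=
  { k | ∃ f : Multiset (Multiset G), f.card = k ∧ (∀ A ∈ f, IsAtomOver G₀ A) ∧ f.sum = B }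

/-- The set of successive distances `Δ(L)` of a set `L ⊆ ℕ`. -/
def distSet (L : Set ℕ) : Set ℕ :=
  { d | ∃ a ∈ L, ∃ b ∈ L, a < b ∧ b - a = d ∧ ∀ c ∈ L, a < c → c < b → False }

/-- The set of distances `Δ(G₀)`: union of `Δ(L(B))` over all nonempty
zero-sum sequences `B` over `G₀`. -/
def DeltaOf (G₀ : Set G) : Set ℕ :=
  ⋃ B : Multiset G, ⋃ (_ : B ≠ 0), distSet (lengthSet G₀ B)

/-- The set of minimal distances `Δ*(G) = { min Δ(G₀) : G₀ ⊆ G, Δ(G₀) ≠ ∅ }`. -/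
def DeltaStar (G : Type*) [AddCommGroup G] : Set ℕ :=
  { d | ∃ G₀ : Set G, (DeltaOf G₀).Nonempty ∧ sInf (DeltaOf G₀) = d }

/-- The cross number `k(S) = Σ_{g ∈ S} 1/ord(g)` (with multiplicity). -/
noncomputable def crossNumber (S : Multiset G) : ℚ :=
  (S.map fun g => ((addOrderOf g : ℚ))⁻¹).sum

/-- `G₀` is an LCN-set: every atom over `G₀` has cross number at least `1`. -/
def IsLCNSet (G₀ : Set G) : Prop :=
  ∀ A : Multiset G, IsAtomOver G₀ A → 1 ≤ crossNumber A

/-- `r` is the rank of the finite abelian group `G`: the number of summands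
in the invariant factor decomposition `G ≅ C_{n₁} ⊕ ... ⊕ C_{n_r}` with
`1 < n₁ ∣ n₂ ∣ ... ∣ n_r`. -/
def IsRank (G : Type*) [AddCommGroup G] (r : ℕ) : Prop :=
  ∃ d : Fin r → ℕ, (∀ i, 1 < d i) ∧ (∀ i j, i ≤ j → d i ∣ d j) ∧
    Nonempty (G ≃+ ((i : Fin r) → ZMod (d i)))

/-- The system of sets of lengths `𝓛(G) = { L(B) : B ∈ 𝓑(G) nonempty }`. -/
def LSystem (G : Type*) [AddCommGroup G] : Set (Set ℕ) :=
  { L | ∃ B : Multiset G, B ≠ 0 ∧ IsZeroSumSeq (Set.univ : Set G) B ∧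
      lengthSet (Set.univ : Set G) B = L }

/-- `d` is the greatest common divisor of the set `S ⊆ ℕ`. -/
def IsSetGcd (S : Set ℕ) (d : ℕ) : Prop :=
  (∀ s ∈ S, d ∣ s) ∧ ∀ e : ℕ, (∀ s ∈ S, e ∣ s) → e ∣ d


set_option linter.unusedSectionVars false

section Aux

variable {G : Type*} [AddCommGroup G] [DecidableEq G]

private lemma count_msum (x : G) (f : Multiset (Multiset G)) :
    (f.sum.count x : ℤ) = (f.map fun A => (A.count x : ℤ)).sum := by
  induction f using Multiset.induction_on with
  | empty => simp
  | cons A f ih => simp [Multiset.count_add, ih]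

private lemma map_sum_eq (x y : G) (n : ℤ) (f : Multiset (Multiset G)) :
    (f.map fun A => n - (n - 1) * (A.count x : ℤ) - (A.count y : ℤ)).sum
      = n * f.card - (n - 1) * (f.sum.count x : ℤ) - (f.sum.count y : ℤ) := by
  induction f using Multiset.induction_on with
  | empty => simp
  | cons A f ih =>
    simp only [Multiset.map_cons, Multiset.sum_cons, ih, Multiset.card_cons,
      Multiset.sum_cons, Multiset.count_add]
    push_cast
    ring

private lemma seq_structure {g : G} (hne : g ≠ -g) {S : Multiset G}
    (hS : ∀ x ∈ S, x ∈ ({g, -g} : Set G)) :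
    S = Multiset.replicate (S.count g) g + Multiset.replicate (S.count (-g)) (-g) := by
  ext x
  rw [Multiset.count_add, Multiset.count_replicate, Multiset.count_replicate]
  split_ifs with h1 h2 h2
  · exact absurd (h1.trans h2.symm) hne
  · subst h1; simp
  · subst h2; simp
  · have hx : x ∉ S := fun h => by
      rcases hS x h with h3 | h3
      · exact h1 h3.symm
      · exact h2 h3.symm
    simp [Multiset.count_eq_zero_of_notMem hx]

private lemma sum_rep (g : G) (a b : ℕ) :
    (Multiset.replicate a g + Multiset.replicate b (-g)).sum = ((a : ℤ) - b) • g := by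
  rw [Multiset.sum_add, Multiset.sum_replicate, Multiset.sum_replicate, sub_zsmul]
  simp [natCast_zsmul]

end Aux

section Atoms

variable {G : Type*} [AddCommGroup G] [DecidableEq G]

private lemma rep_ne_zero {x : G} {n : ℕ} (hn : n ≠ 0) : Multiset.replicate n x ≠ 0 := by
  intro h; apply hn; simpa using congrArg Multiset.card h

private lemma rep_atom {G₀ : Set G} {h : G} (hh : h ∈ G₀) (hpos : 0 < addOrderOf h) :
    IsAtomOver G₀ (Multiset.replicate (addOrderOf h) h) := by
  refine ⟨⟨fun x hx => ?_, ?_⟩, ?_, ?_⟩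
  · rw [Multiset.eq_of_mem_replicate hx]; exact hh
  · rw [Multiset.sum_replicate]; exact addOrderOf_nsmul_eq_zero h
  · exact rep_ne_zero hpos.ne'
  · intro B hB hB0 hBA
    rcases Multiset.le_replicate_iff.mp hB with ⟨k, hk, rfl⟩
    rw [Multiset.sum_replicate]
    intro h0
    have hdvd : addOrderOf h ∣ k := addOrderOf_dvd_iff_nsmul_eq_zero.mpr h0
    have hk0 : k ≠ 0 := fun h => hB0 (by rw [h]; rfl)
    have : addOrderOf h ≤ k := Nat.le_of_dvd (Nat.pos_of_ne_zero hk0) hdvd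
    exact hBA (by rw [le_antisymm hk this])

private lemma pair_atom {g : G} (hg : g ≠ 0) :
    IsAtomOver ({g, -g} : Set G) ({g, -g} : Multiset G) := by
  refine ⟨⟨fun x hx => ?_, by simp⟩, by simp, ?_⟩
  · rcases Multiset.mem_cons.mp hx with h | h
    · exact Or.inl h
    · right; simpa using h
  · intro B hB hB0 hBA hsum
    have hcard := Multiset.card_le_card hB
    simp only [Multiset.insert_eq_cons, Multiset.card_cons, Multiset.card_singleton] at hcard
    rcases Nat.lt_or_ge (Multiset.card B) 2 with h2 | h2
    · have h1 : Multiset.card B = 1 := by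
        have : Multiset.card B ≠ 0 := by simpa [Multiset.card_eq_zero] using hB0
        omega
      obtain ⟨x, rfl⟩ := Multiset.card_eq_one.mp h1
      have hx : x ∈ ({g, -g} : Multiset G) :=
        Multiset.mem_of_le hB (Multiset.mem_singleton_self x)
      have hx0 : x = 0 := by simpa using hsum
      rcases Multiset.mem_cons.mp hx with h | h
      · exact hg (h ▸ hx0 ▸ rfl) |>.elim
      · have : x = -g := by simpa using h
        apply hg; rw [← neg_neg g, ← this, hx0, neg_zero]
    · exact hBA (Multiset.eq_of_le_of_card_le hB (by simpa using h2))

private lemma ne_neg_self {g : G} (hg : 3 ≤ addOrderOf g) : g ≠ -g := by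
  intro h
  have h2 : (2 : ℕ) • g = 0 := by
    rw [two_nsmul]; nth_rewrite 2 [h]; simp
  have := Nat.le_of_dvd (by norm_num) (addOrderOf_dvd_iff_nsmul_eq_zero.mpr h2)
  omega

private lemma ne_zero_self {g : G} (hg : 3 ≤ addOrderOf g) : g ≠ 0 := by
  intro h; rw [h, addOrderOf_zero] at hg; omega

private lemma atom_classify {g : G} (hg : 3 ≤ addOrderOf g) {A : Multiset G}
    (hA : IsAtomOver ({g, -g} : Set G) A) :
    A = Multiset.replicate (addOrderOf g) g ∨
    A = Multiset.replicate (addOrderOf g) (-g) ∨ A = ({g, -g} : Multiset G) := by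
  have hne := ne_neg_self hg
  obtain ⟨⟨hmem, hsum⟩, hA0, hmin⟩ := hA
  set a := A.count g with ha
  set b := A.count (-g) with hb
  have hstruct := seq_structure hne hmem
  rw [← ha, ← hb] at hstruct
  have hz : ((a : ℤ) - b) • g = 0 := by
    rw [← sum_rep g a b, ← hstruct]; exact hsum
  have hdvd : (addOrderOf g : ℤ) ∣ (a : ℤ) - b := addOrderOf_dvd_iff_zsmul_eq_zero.mpr hz
  rcases Nat.eq_zero_or_pos b with hb0 | hbpos
  · have hdvd' : addOrderOf g ∣ a := by
      rw [hb0] at hdvd; simp at hdvd; exact_mod_cast hdvd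
    have ha0 : a ≠ 0 := by
      intro h; apply hA0; rw [hstruct, h, hb0]; simp
    have hge : addOrderOf g ≤ a := Nat.le_of_dvd (Nat.pos_of_ne_zero ha0) hdvd'
    have heq : a = addOrderOf g := by
      by_contra hne'
      have hlt : addOrderOf g < a := lt_of_le_of_ne hge (Ne.symm hne')
      refine hmin (Multiset.replicate (addOrderOf g) g) ?_ ?_ ?_ ?_
      · rw [hstruct, hb0]
        simpa using (Multiset.replicate_le_replicate g).2 hge
      · exact rep_ne_zero (by omega)
      · intro h
        have := congrArg Multiset.card h
        rw [Multiset.card_replicate, hstruct, hb0] at this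
        simp at this; omega
      · rw [Multiset.sum_replicate]; exact addOrderOf_nsmul_eq_zero g
    left; rw [hstruct, hb0, heq]; simp
  · rcases Nat.eq_zero_or_pos a with ha0 | hapos
    · have hdvd' : addOrderOf g ∣ b := by
        rw [ha0] at hdvd
        simp only [Nat.cast_zero, zero_sub, dvd_neg] at hdvd
        exact_mod_cast hdvd
      have hb0 : b ≠ 0 := hbpos.ne'
      have hge : addOrderOf g ≤ b := Nat.le_of_dvd hbpos hdvd'
      have hzneg : addOrderOf g • (-g) = 0 := by
        rw [← addOrderOf_neg g]; exact addOrderOf_nsmul_eq_zero (-g)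
      have heq : b = addOrderOf g := by
        by_contra hne'
        have hlt : addOrderOf g < b := lt_of_le_of_ne hge (Ne.symm hne')
        refine hmin (Multiset.replicate (addOrderOf g) (-g)) ?_ ?_ ?_ ?_
        · rw [hstruct, ha0]
          simpa using (Multiset.replicate_le_replicate (-g)).2 hge
        · exact rep_ne_zero (by omega)
        · intro h
          have := congrArg Multiset.card h
          rw [Multiset.card_replicate, hstruct, ha0] at this
          simp at this; omega
        · rw [Multiset.sum_replicate]; exact hzneg
      right; left; rw [hstruct, ha0, heq]; simp
    · have hpair : ({g, -g} : Multiset G) = Multiset.replicate 1 g + Multiset.replicate 1 (-g) := by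
        rw [Multiset.replicate_one, Multiset.replicate_one, Multiset.singleton_add,
          Multiset.insert_eq_cons]
      have hle : ({g, -g} : Multiset G) ≤ A := by
        rw [hstruct, hpair]
        exact add_le_add ((Multiset.replicate_le_replicate g).2 hapos)
          ((Multiset.replicate_le_replicate (-g)).2 hbpos)
      right; right
      by_contra hne'
      exact hmin _ hle (by simp) (fun h => hne' h.symm) (by simp)

end Atoms



section Lengths

variable {G : Type*} [AddCommGroup G] [DecidableEq G]

private lemma two_mem {g : G} (hg : 3 ≤ addOrderOf g) :
    2 ∈ lengthSet ({g, -g} : Set G)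
      (Multiset.replicate (addOrderOf g) g + Multiset.replicate (addOrderOf g) (-g)) := by
  refine ⟨{Multiset.replicate (addOrderOf g) g, Multiset.replicate (addOrderOf g) (-g)},
    by simp [Multiset.insert_eq_cons], ?_, by simp [Multiset.insert_eq_cons]⟩
  intro A hA
  have hA2 : A = Multiset.replicate (addOrderOf g) g ∨
      A = Multiset.replicate (addOrderOf g) (-g) := by
    simpa [Multiset.insert_eq_cons] using hA
  rcases hA2 with h | h
  · subst h; exact rep_atom (Or.inl rfl) (by omega)
  · have hA' : A = Multiset.replicate (addOrderOf (-g)) (-g) := by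
      rw [addOrderOf_neg]; simpa using h
    subst hA'
    exact rep_atom (Or.inr rfl) (by rw [addOrderOf_neg]; omega)

private lemma nsmul_pair (n : ℕ) (g : G) :
    n • ({g, -g} : Multiset G) = Multiset.replicate n g + Multiset.replicate n (-g) := by
  induction n with
  | zero => simp
  | succ m ih =>
    rw [succ_nsmul, ih, Multiset.replicate_succ, Multiset.replicate_succ,
      Multiset.insert_eq_cons]
    ext x
    simp [Multiset.count_add, Multiset.count_cons, Multiset.count_singleton]
    split_ifs <;> omega

private lemma n_mem {g : G} (hg : 3 ≤ addOrderOf g) :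
    addOrderOf g ∈ lengthSet ({g, -g} : Set G)
      (Multiset.replicate (addOrderOf g) g + Multiset.replicate (addOrderOf g) (-g)) := by
  refine ⟨Multiset.replicate (addOrderOf g) ({g, -g} : Multiset G),
    Multiset.card_replicate _ _, ?_, ?_⟩
  · intro A hA
    rw [Multiset.eq_of_mem_replicate hA]
    exact pair_atom (ne_zero_self hg)
  · rw [Multiset.sum_replicate, nsmul_pair]

private lemma length_dvd {g : G} (hg : 3 ≤ addOrderOf g) {B : Multiset G} {k₁ k₂ : ℕ}
    (h1 : k₁ ∈ lengthSet ({g, -g} : Set G) B) (h2 : k₂ ∈ lengthSet ({g, -g} : Set G) B) :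
    ((addOrderOf g : ℤ) - 2) ∣ (k₁ : ℤ) - k₂ := by
  set n : ℤ := (addOrderOf g : ℤ) with hn
  have key : ∀ k : ℕ, k ∈ lengthSet ({g, -g} : Set G) B →
      (n * (n - 2)) ∣ (n * k - ((n - 1) * (B.count g : ℤ) + (B.count (-g) : ℤ))) := by
    rintro k ⟨f, hcard, hatoms, hsum⟩
    have hms := map_sum_eq g (-g) n f
    rw [hsum, hcard] at hms
    rw [show n * k - ((n - 1) * (B.count g : ℤ) + (B.count (-g) : ℤ))
        = (f.map fun A => n - (n - 1) * (A.count g : ℤ) - (A.count (-g) : ℤ)).sum from by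
      rw [hms]; ring]
    apply Multiset.dvd_sum
    intro z hz
    obtain ⟨A, hA, rfl⟩ := Multiset.mem_map.mp hz
    rcases atom_classify hg (hatoms A hA) with h | h | h <;> subst h
    · have c1 : ((Multiset.replicate (addOrderOf g) g).count g : ℤ) = n := by
        rw [Multiset.count_replicate, if_pos rfl]
      have c2 : ((Multiset.replicate (addOrderOf g) g).count (-g) : ℤ) = 0 := by
        rw [Multiset.count_replicate, if_neg fun h => (ne_neg_self hg) h]
        rfl
      rw [c1, c2]
      exact ⟨-1, by ring⟩
    · have c1 : ((Multiset.replicate (addOrderOf g) (-g)).count g : ℤ) = 0 := by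
        have hgg : -g ≠ g := fun h => (ne_neg_self hg) h.symm
        simp [Multiset.count_replicate, hgg]
      have c2 : ((Multiset.replicate (addOrderOf g) (-g)).count (-g) : ℤ) = n := by
        rw [Multiset.count_replicate, if_pos rfl]
      rw [c1, c2]
      exact ⟨0, by ring⟩
    · have c1 : (({g, -g} : Multiset G).count g : ℤ) = 1 := by
        rw [Multiset.insert_eq_cons, Multiset.count_cons_self,
          Multiset.count_singleton, if_neg (ne_neg_self hg)]
        rfl
      have c2 : (({g, -g} : Multiset G).count (-g) : ℤ) = 1 := by
        rw [Multiset.insert_eq_cons, Multiset.count_cons_of_ne fun h => (ne_neg_self hg) h.symm,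
          Multiset.count_singleton, if_pos rfl]
        rfl
      rw [c1, c2]
      exact ⟨0, by ring⟩
  have hsub := dvd_sub (key k₁ h1) (key k₂ h2)
  have h3 : n * (n - 2) ∣ n * ((k₁ : ℤ) - k₂) := by
    have he : n * ((k₁ : ℤ) - k₂) = (n * k₁ - ((n - 1) * (B.count g : ℤ) + (B.count (-g) : ℤ))) -
        (n * k₂ - ((n - 1) * (B.count g : ℤ) + (B.count (-g) : ℤ))) := by ring
    rw [he]; exact hsub
  have hn0 : n ≠ 0 := by rw [hn]; exact_mod_cast (by omega : addOrderOf g ≠ 0)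
  exact (mul_dvd_mul_iff_left hn0).mp h3

end Lengths

theorem ord_sub_two_mem_DeltaStar
    (G : Type*) [AddCommGroup G] [Fintype G] :
    (∀ g : G, 3 ≤ addOrderOf g → addOrderOf g - 2 ∈ DeltaStar G) ∧
    (3 ≤ AddMonoid.exponent G → AddMonoid.exponent G - 2 ∈ DeltaStar G) := by
  classical
  have main : ∀ g : G, 3 ≤ addOrderOf g → addOrderOf g - 2 ∈ DeltaStar G := by
    intro g hg
    have hmem : addOrderOf g - 2 ∈ DeltaOf ({g, -g} : Set G) := by
      rw [DeltaOf, Set.mem_iUnion]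
      refine ⟨Multiset.replicate (addOrderOf g) g + Multiset.replicate (addOrderOf g) (-g), ?_⟩
      rw [Set.mem_iUnion]
      refine ⟨fun h => ?_, 2, two_mem hg, addOrderOf g, n_mem hg, by omega, rfl, ?_⟩
      · have := congrArg Multiset.card h
        simp only [Multiset.card_add, Multiset.card_replicate, Multiset.card_zero] at this
        omega
      · intro c hc h2c hcn
        have hdvd := length_dvd hg hc (two_mem hg)
        have hle := Int.le_of_dvd (by omega) hdvd
        omega
    refine ⟨({g, -g} : Set G), ⟨_, hmem⟩, le_antisymm (Nat.sInf_le hmem) ?_⟩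
    refine le_csInf ⟨_, hmem⟩ ?_
    intro d hd
    rw [DeltaOf, Set.mem_iUnion] at hd
    obtain ⟨B, hd⟩ := hd
    rw [Set.mem_iUnion] at hd
    obtain ⟨hB0, a, haL, b, hbL, hab, hd, -⟩ := hd
    have hdvd := length_dvd hg hbL haL
    have hle := Int.le_of_dvd (by omega) hdvd
    omega
  refine ⟨main, fun h => ?_⟩
  obtain ⟨g, hgs⟩ := AddMonoid.exists_addOrderOf_eq_exponent (G := G) AddMonoid.ExponentExists.of_finite
  rw [← hgs]
  exact main g (by rw [hgs]; exact h)
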